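/- Equivalence of the parametric hairclip with the implicit hairclip: let t ∈ ℝ, set a = (1 + e^{2t})^{−1/2} (so 0 < a < 1), and for θ ∈ (−π, π) let z = −Log(a + e^{iθ}) + ½·log(1 − a²), using the principal complex logarithm. Then sinh(Re z) = −e^{−t}·cos(Im z); that is, the parametric curve coincides with the hairclip solution e^{−t}cos y = −sinh x. -/

import Mathlib

/-- Equivalence of the parametric hairclip with the implicit hairclip: for
`t ∈ ℝ`, `a = (1 + e^{2t})^{−1/2}` and `z = −Log(a + e^{iθ}) + ½ log(1 − a²)`,
one has `sinh(Re z) = −e^{−t} cos(Im z)`. -/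
theorem hairclip_parametric_eq_implicit (t θ : ℝ)
    (hθ : θ ∈ Set.Ioo (-Real.pi) Real.pi) :
    Real.sinh
        ((-Complex.log (((1 + Real.exp (2 * t)) ^ (-(1 : ℝ) / 2) : ℝ) +
            Complex.exp ((θ : ℂ) * Complex.I)) +
          (((1 / 2) * Real.log (1 - ((1 + Real.exp (2 * t)) ^ (-(1 : ℝ) / 2) : ℝ) ^ 2) : ℝ) :
            ℂ)).re) =
      -(Real.exp (-t) *
        Real.cos
          ((-Complex.log (((1 + Real.exp (2 * t)) ^ (-(1 : ℝ) / 2) : ℝ) +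
              Complex.exp ((θ : ℂ) * Complex.I)) +
            (((1 / 2) * Real.log (1 - ((1 + Real.exp (2 * t)) ^ (-(1 : ℝ) / 2) : ℝ) ^ 2) : ℝ) :
              ℂ)).im)) := by
  set E := Real.exp (2 * t) with hE
  have hEpos : 0 < E := Real.exp_pos _
  have h1E : (0:ℝ) < 1 + E := by linarith
  set a : ℝ := (1 + E) ^ (-(1:ℝ) / 2) with ha
  have hapos : 0 < a := Real.rpow_pos_of_pos h1E _
  have ha2 : a ^ 2 = (1 + E)⁻¹ := by
    rw [ha, ← Real.rpow_natCast _ 2, ← Real.rpow_mul h1E.le]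
    norm_num
    exact Real.rpow_neg_one _
  have ha1 : a < 1 := by
    have h2 : a ^ 2 < 1 := by
      rw [ha2]
      rw [inv_lt_one_iff₀]
      right; linarith
    nlinarith
  have hs : 1 - a ^ 2 = E / (1 + E) := by
    rw [ha2]; field_simp; ring
  have hspos : (0:ℝ) < 1 - a ^ 2 := by rw [hs]; positivity
  set w : ℂ := (a : ℂ) + Complex.exp ((θ : ℂ) * Complex.I) with hw
  set A := ‖w‖ with hA
  have hA2 : A ^ 2 = a ^ 2 + 2 * a * Real.cos θ + 1 := by
    rw [hA, Complex.sq_norm, Complex.normSq_apply, hw]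
    simp [Complex.exp_ofReal_mul_I_re, Complex.exp_ofReal_mul_I_im]
    nlinarith [Real.sin_sq_add_cos_sq θ]
  have hApos : 0 < A := by
    have h1 : (0:ℝ) < A ^ 2 := by
      rw [hA2]; nlinarith [Real.neg_one_le_cos θ]
    nlinarith [norm_nonneg w]
  have hw0 : w ≠ 0 := by
    intro h
    rw [h] at hA
    simp [hA] at hApos
  have hwre : w.re = a + Real.cos θ := by
    simp [hw, Complex.exp_ofReal_mul_I_re]
  have hexpc : Real.exp ((1/2) * Real.log (1 - a ^ 2)) = Real.sqrt (1 - a ^ 2) := by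
    rw [Real.sqrt_eq_rpow, Real.rpow_def_of_pos hspos]; ring_nf
  have hsq : Real.sqrt (1 - a ^ 2) * Real.sqrt (1 - a ^ 2) = 1 - a ^ 2 :=
    Real.mul_self_sqrt hspos.le
  have hsqpos : 0 < Real.sqrt (1 - a ^ 2) := Real.sqrt_pos.mpr hspos
  have key : Real.exp (-t) * Real.sqrt (1 - a ^ 2) = a := by
    have h1 : Real.exp (-t) * Real.sqrt (1 - a ^ 2) = Real.sqrt (Real.exp (-t) ^ 2 * (1 - a ^ 2)) := by
      rw [Real.sqrt_mul (by positivity), Real.sqrt_sq (Real.exp_pos _).le]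
    have h2 : Real.exp (-t) ^ 2 * (1 - a ^ 2) = a ^ 2 := by
      rw [hs, ha2, ← Real.exp_nat_mul]
      push_cast
      rw [show (2:ℝ) * -t = -(2*t) by ring, Real.exp_neg, ← hE]
      field_simp
    rw [h1, h2, Real.sqrt_sq hapos.le]
  rw [show (-Complex.log w + (((1 / 2) * Real.log (1 - a ^ 2) : ℝ) : ℂ)).re
      = -Real.log A + (1/2) * Real.log (1 - a ^ 2) by
    simp [Complex.log_re, hA]]
  rw [show (-Complex.log w + (((1 / 2) * Real.log (1 - a ^ 2) : ℝ) : ℂ)).im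
      = -(Complex.arg w) by
    simp [Complex.log_im]]
  rw [Real.cos_neg, Complex.cos_arg hw0, hwre, ← hA]
  rw [Real.sinh_eq]
  rw [show -(-Real.log A + 1 / 2 * Real.log (1 - a ^ 2))
      = Real.log A + -((1/2) * Real.log (1 - a ^ 2)) by ring]
  rw [Real.exp_add, Real.exp_add, Real.exp_neg, Real.exp_neg, Real.exp_log hApos, hexpc]
  field_simp
  linear_combination (2 * (a + Real.cos θ)) * key + hsq - hA2
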